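/- Let Γ be a discrete group and L an integer-valued proper length function on Γ. For n ∈ ℕ let C_n := {g ∈ Γ : L(g) = n} and let 1_n be the indicator function of C_n, so ‖1_n‖₂ = √|C_n|. If there exists a polynomial P with real coefficients such that ⦀1_n⦀ ≤ P(n)·‖1_n‖₂ for all n ∈ ℕ, then Γ has radial rapid decay with respect to L: there exists a polynomial Q such that ⦀f⦀ ≤ Q(L(f))·‖f‖₂ for every radial finitely supported f : Γ → ℂ. -/

import Mathlib

open MeasureTheory
open scoped ENNReal

namespace Stmt2

variable {G : Type*} [Group G]

/-- Convolution of a finitely supported function with an arbitrary function. -/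
noncomputable def conv (f : G →₀ ℂ) (ξ : G → ℂ) : G → ℂ :=
  fun g => ∑ h ∈ f.support, f h * ξ (h⁻¹ * g)

/-- The operator norm of the convolution operator `ξ ↦ f * ξ` on `ℓ²(G)` is at most `C`. -/
noncomputable def ConvOpNormLE (f : G →₀ ℂ) (C : ℝ) : Prop :=
  ∀ ξ : lp (fun _ : G => ℂ) 2, ∃ hmem : Memℓp (conv f (ξ : ∀ _ : G, ℂ)) 2,
    ‖(⟨conv f (ξ : ∀ _ : G, ℂ), hmem⟩ : lp (fun _ : G => ℂ) 2)‖ ≤ C * ‖ξ‖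

/-- The ℓ²-norm of a finitely supported function. -/
noncomputable def l2norm (f : G →₀ ℂ) : ℝ :=
  Real.sqrt (∑ g ∈ f.support, ‖f g‖ ^ 2)

/-- `L(f) = max {L g : f g ≠ 0}`. -/
noncomputable def lenOf (L : G → ℝ) (f : G →₀ ℂ) : ℝ :=
  sSup (L '' {g | f g ≠ 0})

def IsLengthFun (L : G → ℝ) : Prop :=
  L 1 = 0 ∧ (∀ g, 0 ≤ L g) ∧ (∀ g, L g⁻¹ = L g) ∧ ∀ g h, L (g * h) ≤ L g + L h

def Radial (L : G → ℝ) (f : G →₀ ℂ) : Prop :=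
  ∀ g₁ g₂, L g₁ = L g₂ → f g₁ = f g₂

/-- Radial rapid decay with respect to `L`. -/
def HasRRD (L : G → ℝ) : Prop :=
  ∃ Q : Polynomial ℝ, ∀ f : G →₀ ℂ, Radial L f →
    ConvOpNormLE f (Q.eval (lenOf L f) * l2norm f)

end Stmt2

namespace Stmt2Aux

open Stmt2

variable {G : Type*} [Group G]

lemma conv_eq_sum (f : G →₀ ℂ) (ξ : G → ℂ) {S : Finset G} (hS : f.support ⊆ S) (g : G) :
    conv f ξ g = ∑ h ∈ S, f h * ξ (h⁻¹ * g) :=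
  Finset.sum_subset hS (fun h _ hh => by
    simp [Finsupp.notMem_support_iff.mp hh])

lemma conv_add (f₁ f₂ : G →₀ ℂ) (ξ : G → ℂ) (g : G) :
    conv (f₁ + f₂) ξ g = conv f₁ ξ g + conv f₂ ξ g := by
  classical
  rw [conv_eq_sum (f₁ + f₂) ξ (S := f₁.support ∪ f₂.support)
      (Finsupp.support_add),
    conv_eq_sum f₁ ξ (S := f₁.support ∪ f₂.support) Finset.subset_union_left,
    conv_eq_sum f₂ ξ (S := f₁.support ∪ f₂.support) Finset.subset_union_right,
    ← Finset.sum_add_distrib]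
  exact Finset.sum_congr rfl fun h _ => by simp [add_mul]

lemma conv_smul (c : ℂ) (f : G →₀ ℂ) (ξ : G → ℂ) (g : G) :
    conv (c • f) ξ g = c * conv f ξ g := by
  rw [conv_eq_sum (c • f) ξ (S := f.support) (Finsupp.support_smul), conv,
    Finset.mul_sum]
  exact Finset.sum_congr rfl fun h _ => by simp [mul_assoc]

lemma conv_zero (ξ : G → ℂ) (g : G) : conv (0 : G →₀ ℂ) ξ g = 0 := by
  simp [conv]

lemma conv_finset_sum {ι : Type*} (s : Finset ι) (F : ι → (G →₀ ℂ)) (ξ : G → ℂ) (g : G) :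
    conv (∑ i ∈ s, F i) ξ g = ∑ i ∈ s, conv (F i) ξ g := by
  classical
  induction s using Finset.induction with
  | empty => simp [conv_zero]
  | insert _ _ hx ih =>
    rw [Finset.sum_insert hx, conv_add, ih, Finset.sum_insert hx]

noncomputable def absPoly (P : Polynomial ℝ) : Polynomial ℝ :=
  ∑ i ∈ P.support, Polynomial.C |P.coeff i| * Polynomial.X ^ i

lemma absPoly_eval (P : Polynomial ℝ) (x : ℝ) :
    (absPoly P).eval x = ∑ i ∈ P.support, |P.coeff i| * x ^ i := by
  simp [absPoly, Polynomial.eval_finset_sum]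

lemma abs_eval_le (P : Polynomial ℝ) {x : ℝ} (hx : 0 ≤ x) :
    |P.eval x| ≤ (absPoly P).eval x := by
  rw [absPoly_eval, Polynomial.eval_eq_sum, Polynomial.sum_def]
  refine (Finset.abs_sum_le_sum_abs _ _).trans (le_of_eq ?_)
  exact Finset.sum_congr rfl fun i _ => by
    rw [abs_mul, abs_pow, abs_of_nonneg hx]

lemma absPoly_eval_nonneg (P : Polynomial ℝ) {x : ℝ} (hx : 0 ≤ x) :
    0 ≤ (absPoly P).eval x := by
  rw [absPoly_eval]
  exact Finset.sum_nonneg fun i _ => mul_nonneg (abs_nonneg _) (pow_nonneg hx _)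

lemma absPoly_mono (P : Polynomial ℝ) {x y : ℝ} (hx : 0 ≤ x) (hxy : x ≤ y) :
    (absPoly P).eval x ≤ (absPoly P).eval y := by
  rw [absPoly_eval, absPoly_eval]
  exact Finset.sum_le_sum fun i _ =>
    mul_le_mul_of_nonneg_left (pow_le_pow_left₀ hx hxy i) (abs_nonneg _)

noncomputable def Qpoly (P : Polynomial ℝ) : Polynomial ℝ :=
  (Polynomial.X + 1) * absPoly P

lemma sqrt_sum_sq_le (P : Polynomial ℝ) (N : ℕ) :
    Real.sqrt (∑ n ∈ Finset.range (N + 1), (P.eval (n : ℝ)) ^ 2)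
      ≤ (Qpoly P).eval (N : ℝ) := by
  have hA : 0 ≤ (absPoly P).eval (N : ℝ) := absPoly_eval_nonneg P (Nat.cast_nonneg N)
  have h1 : ∑ n ∈ Finset.range (N + 1), (P.eval (n : ℝ)) ^ 2
      ≤ (N + 1 : ℝ) * ((absPoly P).eval (N : ℝ)) ^ 2 := by
    calc ∑ n ∈ Finset.range (N + 1), (P.eval (n : ℝ)) ^ 2
        ≤ ∑ n ∈ Finset.range (N + 1), ((absPoly P).eval (N : ℝ)) ^ 2 := by
          refine Finset.sum_le_sum fun n hn => ?_
          have h2 : |P.eval (n : ℝ)| ≤ (absPoly P).eval (N : ℝ) :=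
            (abs_eval_le P (Nat.cast_nonneg n)).trans
              (absPoly_mono P (Nat.cast_nonneg n)
                (Nat.cast_le.mpr (Nat.lt_succ_iff.mp (Finset.mem_range.mp hn))))
          calc (P.eval (n : ℝ)) ^ 2 = |P.eval (n : ℝ)| ^ 2 := (sq_abs _).symm
            _ ≤ ((absPoly P).eval (N : ℝ)) ^ 2 :=
              pow_le_pow_left₀ (abs_nonneg _) h2 2
      _ = (N + 1 : ℝ) * ((absPoly P).eval (N : ℝ)) ^ 2 := by
          rw [Finset.sum_const, Finset.card_range]
          ring
  refine (Real.sqrt_le_sqrt h1).trans ?_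
  rw [Real.sqrt_mul (by positivity), Real.sqrt_sq hA]
  have h4 : Real.sqrt ((N : ℝ) + 1) ≤ (N : ℝ) + 1 := by
    have : ((N : ℝ) + 1) ≤ ((N : ℝ) + 1) ^ 2 := by nlinarith [Nat.cast_nonneg (α := ℝ) N]
    calc Real.sqrt ((N : ℝ) + 1) ≤ Real.sqrt (((N : ℝ) + 1) ^ 2) := Real.sqrt_le_sqrt this
      _ = (N : ℝ) + 1 := Real.sqrt_sq (by positivity)
  rw [Qpoly, Polynomial.eval_mul]
  simp only [Polynomial.eval_add, Polynomial.eval_X, Polynomial.eval_one]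
  exact mul_le_mul_of_nonneg_right h4 hA

end Stmt2Aux

/-- For an integer-valued proper length function, rapid decay on spheres implies
radial rapid decay: if `⦀1_n⦀ ≤ P(n)·‖1_n‖₂ = P(n)·√|C_n|` for all `n`, where
`1_n` is the indicator function of the sphere `C_n = {g : L g = n}`, then `Γ`
has radial rapid decay with respect to `L`. -/
theorem statement2
    {Γ : Type*} [Group Γ] (L : Γ → ℝ)
    (hlen : Stmt2.IsLengthFun L)
    (hint : ∀ g : Γ, ∃ n : ℕ, L g = n)
    (hproper : ∀ t : ℝ, {g : Γ | L g ≤ t}.Finite)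
    (hfin : ∀ n : ℕ, {g : Γ | L g = n}.Finite)
    (P : Polynomial ℝ)
    (hP : ∀ n : ℕ,
      Stmt2.ConvOpNormLE
        (Finsupp.indicator (hfin n).toFinset fun _ _ => (1 : ℂ))
        (P.eval (n : ℝ) * Real.sqrt ((hfin n).toFinset.card))) :
    Stmt2.HasRRD L := by
  classical
  refine ⟨Stmt2Aux.Qpoly P, fun f hrad ξ => ?_⟩
  by_cases hf0 : f = 0
  · subst hf0
    have hc : Stmt2.conv (0 : Γ →₀ ℂ) (ξ : ∀ _ : Γ, ℂ) = 0 :=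
      funext fun g => Stmt2Aux.conv_zero _ g
    have hmem : Memℓp (Stmt2.conv (0 : Γ →₀ ℂ) (ξ : ∀ _ : Γ, ℂ)) 2 := by
      rw [hc]; exact zero_memℓp
    refine ⟨hmem, ?_⟩
    have hz : (⟨Stmt2.conv (0 : Γ →₀ ℂ) (ξ : ∀ _ : Γ, ℂ), hmem⟩ : lp (fun _ : Γ => ℂ) 2) = 0 :=
      lp.ext (by rw [lp.coeFn_zero]; exact hc)
    rw [hz, norm_zero]
    have hl2 : Stmt2.l2norm (0 : Γ →₀ ℂ) = 0 := by simp [Stmt2.l2norm]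
    rw [hl2, mul_zero, zero_mul]
  -- nonzero case
  have hs : f.support.Nonempty := Finsupp.support_nonempty_iff.mpr hf0
  have hsupeq : {g : Γ | f g ≠ 0} = ↑f.support := by
    ext g; simp [Finsupp.mem_support_iff]
  have hSfin : (L '' {g | f g ≠ 0}).Finite := by
    rw [hsupeq]; exact (f.support.finite_toSet).image L
  have hSne : (L '' {g | f g ≠ 0}).Nonempty := by
    obtain ⟨g, hg⟩ := hs
    exact ⟨L g, g, Finsupp.mem_support_iff.mp hg, rfl⟩
  obtain ⟨g₀, hg₀, hg₀'⟩ := hSne.csSup_mem hSfin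
  obtain ⟨N, hNg₀⟩ := hint g₀
  have hsup : sSup (L '' {g : Γ | f g ≠ 0}) = (N : ℝ) := hg₀'.symm ▸ hNg₀
  have hlenf : Stmt2.lenOf L f = (N : ℝ) := hsup
  have hub : ∀ g, f g ≠ 0 → L g ≤ (N : ℝ) := fun g hg =>
    (le_csSup hSfin.bddAbove ⟨g, hg, rfl⟩).trans_eq hsup
  -- spheres
  set One : ℕ → (Γ →₀ ℂ) :=
    fun n => Finsupp.indicator (hfin n).toFinset (fun _ _ => (1 : ℂ)) with hOne
  have hOne1 : ∀ (n : ℕ) (g : Γ), L g = (n : ℝ) → One n g = 1 := by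
    intro n g hg
    rw [hOne]
    simp [Finsupp.indicator_apply, Set.Finite.mem_toFinset, hg]
  have hOne0 : ∀ (n : ℕ) (g : Γ), L g ≠ (n : ℝ) → One n g = 0 := by
    intro n g hg
    rw [hOne]
    simp [Finsupp.indicator_apply, Set.Finite.mem_toFinset, hg]
  -- radial values
  have hcex : ∀ n : ℕ, ∃ cn : ℂ, ∀ g, L g = (n : ℝ) → f g = cn := by
    intro n
    by_cases hne : ∃ g, L g = (n : ℝ)
    · obtain ⟨g₁, hg₁⟩ := hne
      exact ⟨f g₁, fun g hg => hrad g g₁ (hg.trans hg₁.symm)⟩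
    · exact ⟨0, fun g hg => absurd ⟨g, hg⟩ hne⟩
  choose c hcspec using hcex
  -- decomposition
  have hdecomp : f = ∑ n ∈ Finset.range (N + 1), c n • One n := by
    ext g
    obtain ⟨m, hm⟩ := hint g
    rw [Finsupp.finset_sum_apply]
    by_cases hmN : m < N + 1
    · rw [Finset.sum_eq_single_of_mem m (Finset.mem_range.mpr hmN)
        (fun n _ hn => by
          rw [Finsupp.smul_apply, hOne0 n g (by
            rw [hm]; exact_mod_cast fun h => hn ((Nat.cast_inj.mp h)).symm), smul_zero])]
      rw [Finsupp.smul_apply, hOne1 m g hm, smul_eq_mul, mul_one]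
      exact hcspec m g hm
    · have hfg : f g = 0 := by
        by_contra hfg
        exact hmN (Nat.lt_succ_of_le (Nat.cast_le.mp (hm ▸ hub g hfg)))
      rw [hfg]
      refine (Finset.sum_eq_zero fun n hn => ?_).symm
      have hnm : n ≠ m := Nat.ne_of_lt (lt_of_lt_of_le (Finset.mem_range.mp hn)
        (Nat.not_lt.mp hmN))
      rw [Finsupp.smul_apply, hOne0 n g (by
        rw [hm]; exact_mod_cast fun h => hnm ((Nat.cast_inj.mp h)).symm), smul_zero]
  -- ℓ² identity
  have hT : f.support ⊆ (Finset.range (N + 1)).biUnion (fun n => (hfin n).toFinset) := by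
    intro g hg
    obtain ⟨m, hm⟩ := hint g
    have hgne := Finsupp.mem_support_iff.mp hg
    refine Finset.mem_biUnion.mpr ⟨m, Finset.mem_range.mpr
      (Nat.lt_succ_of_le (Nat.cast_le.mp (hm ▸ hub g hgne))),
      (hfin m).mem_toFinset.mpr hm⟩
  have hdisj : (↑(Finset.range (N + 1)) : Set ℕ).PairwiseDisjoint
      (fun n => (hfin n).toFinset) := by
    intro a _ b _ hab
    refine Finset.disjoint_left.mpr fun g hga hgb => hab ?_
    exact Nat.cast_inj.mp ((((hfin a).mem_toFinset.mp hga)).symm.trans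
      ((hfin b).mem_toFinset.mp hgb))
  have hs2 : ∑ g ∈ f.support, ‖f g‖ ^ 2
      = ∑ n ∈ Finset.range (N + 1), ((hfin n).toFinset.card : ℝ) * ‖c n‖ ^ 2 := by
    rw [Finset.sum_subset hT (fun g _ hg => by
      simp [Finsupp.notMem_support_iff.mp hg]), Finset.sum_biUnion hdisj]
    refine Finset.sum_congr rfl fun n _ => ?_
    rw [Finset.sum_congr rfl (fun g hg => by
      rw [hcspec n g ((hfin n).mem_toFinset.mp hg)]), Finset.sum_const, nsmul_eq_mul]
  -- lp elements
  have hm2 : ∀ n : ℕ, Memℓp (Stmt2.conv (One n) (ξ : ∀ _ : Γ, ℂ)) 2 :=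
    fun n => (hP n ξ).choose
  set η : ℕ → lp (fun _ : Γ => ℂ) 2 := fun n => ⟨_, hm2 n⟩ with hη
  have hηnorm : ∀ n, ‖η n‖ ≤ P.eval (n : ℝ) * Real.sqrt ((hfin n).toFinset.card) * ‖ξ‖ :=
    fun n => (hP n ξ).choose_spec
  set S : lp (fun _ : Γ => ℂ) 2 := ∑ n ∈ Finset.range (N + 1), c n • η n with hS
  have hcoe : Stmt2.conv f (ξ : ∀ _ : Γ, ℂ) = ⇑S := by
    funext g
    calc Stmt2.conv f (ξ : ∀ _ : Γ, ℂ) g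
        = ∑ n ∈ Finset.range (N + 1), c n * Stmt2.conv (One n) (ξ : ∀ _ : Γ, ℂ) g := by
          rw [hdecomp, Stmt2Aux.conv_finset_sum]
          exact Finset.sum_congr rfl fun n _ => Stmt2Aux.conv_smul _ _ _ _
      _ = S g := by
          rw [hS, lp.coeFn_sum, Finset.sum_apply]
          exact (Finset.sum_congr rfl fun n _ => by
            rw [lp.coeFn_smul, Pi.smul_apply, smul_eq_mul]).symm
  have hmem : Memℓp (Stmt2.conv f (ξ : ∀ _ : Γ, ℂ)) 2 := by
    rw [hcoe]; exact lp.memℓp S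
  refine ⟨hmem, ?_⟩
  have heq : (⟨Stmt2.conv f (ξ : ∀ _ : Γ, ℂ), hmem⟩ : lp (fun _ : Γ => ℂ) 2) = S :=
    lp.ext hcoe
  rw [heq]
  -- the key scalar inequality
  have key : ∑ n ∈ Finset.range (N + 1),
      ‖c n‖ * (P.eval (n : ℝ) * Real.sqrt ((hfin n).toFinset.card))
      ≤ (Stmt2Aux.Qpoly P).eval (Stmt2.lenOf L f) * Stmt2.l2norm f := by
    set a : ℕ → ℝ := fun n => |P.eval (n : ℝ)| with ha
    set b : ℕ → ℝ := fun n => ‖c n‖ * Real.sqrt ((hfin n).toFinset.card) with hb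
    have step1 : ∑ n ∈ Finset.range (N + 1),
        ‖c n‖ * (P.eval (n : ℝ) * Real.sqrt ((hfin n).toFinset.card))
        ≤ ∑ n ∈ Finset.range (N + 1), a n * b n := by
      refine Finset.sum_le_sum fun n _ => ?_
      have : ‖c n‖ * (P.eval (n : ℝ) * Real.sqrt ((hfin n).toFinset.card))
          ≤ ‖c n‖ * (|P.eval (n : ℝ)| * Real.sqrt ((hfin n).toFinset.card)) :=
        mul_le_mul_of_nonneg_left
          (mul_le_mul_of_nonneg_right (le_abs_self _) (Real.sqrt_nonneg _))
          (norm_nonneg _)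
      refine this.trans (le_of_eq ?_)
      rw [ha, hb]; ring
    have hbnn : ∀ n ∈ Finset.range (N + 1), (0:ℝ) ≤ b n := fun n _ =>
      mul_nonneg (norm_nonneg _) (Real.sqrt_nonneg _)
    have hann : ∀ n ∈ Finset.range (N + 1), (0:ℝ) ≤ a n := fun n _ => abs_nonneg _
    have hcs := Finset.sum_mul_sq_le_sq_mul_sq (Finset.range (N + 1)) a b
    have habnn : (0:ℝ) ≤ ∑ n ∈ Finset.range (N + 1), a n * b n :=
      Finset.sum_nonneg fun n hn => mul_nonneg (hann n hn) (hbnn n hn)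
    have hcs' : ∑ n ∈ Finset.range (N + 1), a n * b n
        ≤ Real.sqrt (∑ n ∈ Finset.range (N + 1), a n ^ 2)
          * Real.sqrt (∑ n ∈ Finset.range (N + 1), b n ^ 2) := by
      have h := Real.sqrt_le_sqrt hcs
      rwa [Real.sqrt_sq habnn,
        Real.sqrt_mul (Finset.sum_nonneg fun n _ => sq_nonneg _)] at h
    have hA : Real.sqrt (∑ n ∈ Finset.range (N + 1), a n ^ 2)
        ≤ (Stmt2Aux.Qpoly P).eval (N : ℝ) := by
      have : ∑ n ∈ Finset.range (N + 1), a n ^ 2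
          = ∑ n ∈ Finset.range (N + 1), (P.eval (n : ℝ)) ^ 2 :=
        Finset.sum_congr rfl fun n _ => by rw [ha]; exact sq_abs _
      rw [this]
      exact Stmt2Aux.sqrt_sum_sq_le P N
    have hB : Real.sqrt (∑ n ∈ Finset.range (N + 1), b n ^ 2) = Stmt2.l2norm f := by
      have : ∑ n ∈ Finset.range (N + 1), b n ^ 2
          = ∑ g ∈ f.support, ‖f g‖ ^ 2 := by
        rw [hs2]
        refine Finset.sum_congr rfl fun n _ => ?_
        rw [hb, mul_pow, Real.sq_sqrt (Nat.cast_nonneg _)]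
        ring
      rw [this, Stmt2.l2norm]
    calc ∑ n ∈ Finset.range (N + 1),
        ‖c n‖ * (P.eval (n : ℝ) * Real.sqrt ((hfin n).toFinset.card))
        ≤ ∑ n ∈ Finset.range (N + 1), a n * b n := step1
      _ ≤ Real.sqrt (∑ n ∈ Finset.range (N + 1), a n ^ 2)
          * Real.sqrt (∑ n ∈ Finset.range (N + 1), b n ^ 2) := hcs'
      _ ≤ (Stmt2Aux.Qpoly P).eval (N : ℝ)
          * Real.sqrt (∑ n ∈ Finset.range (N + 1), b n ^ 2) :=
        mul_le_mul_of_nonneg_right hA (Real.sqrt_nonneg _)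
      _ = (Stmt2Aux.Qpoly P).eval (Stmt2.lenOf L f) * Stmt2.l2norm f := by
        rw [hB, hlenf]
  calc ‖S‖ ≤ ∑ n ∈ Finset.range (N + 1), ‖c n • η n‖ := by
        rw [hS]; exact norm_sum_le _ _
    _ = ∑ n ∈ Finset.range (N + 1), ‖c n‖ * ‖η n‖ :=
        Finset.sum_congr rfl fun n _ => norm_smul _ _
    _ ≤ (∑ n ∈ Finset.range (N + 1),
        ‖c n‖ * (P.eval (n : ℝ) * Real.sqrt ((hfin n).toFinset.card))) * ‖ξ‖ := by
        rw [Finset.sum_mul]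
        refine Finset.sum_le_sum fun n _ => ?_
        rw [mul_assoc]
        exact mul_le_mul_of_nonneg_left (hηnorm n) (norm_nonneg _)
    _ ≤ (Stmt2Aux.Qpoly P).eval (Stmt2.lenOf L f) * Stmt2.l2norm f * ‖ξ‖ :=
        mul_le_mul_of_nonneg_right key (norm_nonneg _)
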